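/- For every complex w with |Im w| < γ, the series Σ_{n=1}^∞ (2i/n)·sin(2nw)/(1 + e^{2nγ}) converges, the infinite product below converges, and exp( −Σ_{n=1}^∞ (2i/n)·sin(2nw)/(1 + e^{2nγ}) ) = Π_{k=1}^∞ [ (1 − e^{−2((2k−1)γ − iw)})·(1 − e^{−2(2kγ + iw)}) ] / [ (1 − e^{−2((2k−1)γ + iw)})·(1 − e^{−2(2kγ − iw)}) ]. Equivalently, the dressed phase satisfies exp(−φ(x, z)) = e^{−i(π/2 + x − z)}·Π_{k=1}^∞ [ (1 − e^{−2((2k−1)γ − i(x−z))})·(1 − e^{−2(2kγ + i(x−z))}) ] / [ (1 − e^{−2((2k−1)γ + i(x−z))})·(1 − e^{−2(2kγ − i(x−z))}) ] for |Im(x − z)| < γ. -/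

import Mathlib

/-- The dressed phase
`φ(x, z) = i·(π/2 + x − z) + Σ_{n=1}^∞ (2i/n)·sin(2n(x − z))/(1 + e^{2nγ})`. -/
noncomputable def dressedPhase (γ : ℝ) (x z : ℂ) : ℂ :=
  Complex.I * ((Real.pi / 2 : ℝ) + x - z) +
    ∑' n : ℕ, (2 * Complex.I / ((n : ℂ) + 1)) * Complex.sin (2 * ((n : ℂ) + 1) * (x - z)) /
      (1 + (Real.exp (2 * ((n : ℝ) + 1) * γ) : ℂ))

/-- The `k`-th factor (`k = 1, 2, …` encoded as `k : ℕ` with value `k+1`) of the infinite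
product `P(w)` representing `exp` of minus the series part of the dressed phase. -/
noncomputable def phaseProdTerm (γ : ℝ) (w : ℂ) (k : ℕ) : ℂ :=
  ((1 - Complex.exp (-2 * ((2 * (k : ℂ) + 1) * (γ : ℂ) - Complex.I * w))) *
   (1 - Complex.exp (-2 * ((2 * (k : ℂ) + 2) * (γ : ℂ) + Complex.I * w)))) /
  ((1 - Complex.exp (-2 * ((2 * (k : ℂ) + 1) * (γ : ℂ) + Complex.I * w))) *
   (1 - Complex.exp (-2 * ((2 * (k : ℂ) + 2) * (γ : ℂ) - Complex.I * w))))

/- ### Auxiliary material -/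

lemma norm_cexp_neg_two_mul (v : ℂ) : ‖Complex.exp (-2 * v)‖ = Real.exp (-2 * v.re) := by
  rw [Complex.norm_exp]
  congr 1
  simp [Complex.mul_re]

lemma one_sub_cexp_neg_two_mul_ne_zero (v : ℂ) (hv : 0 < v.re) :
    1 - Complex.exp (-2 * v) ≠ 0 := by
  intro h
  have h1 : Complex.exp (-2 * v) = 1 := by linear_combination -h
  have h2 : Real.exp (-2 * v.re) = 1 := by
    rw [← norm_cexp_neg_two_mul, h1, norm_one]
  have h4 : Real.exp (-2 * v.re) < 1 := Real.exp_lt_one_iff.mpr (by linarith)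
  rw [h2] at h4
  exact lt_irrefl 1 h4

lemma hasSum_exp_neg_log (u : ℂ) (hu : 0 < u.re) :
    HasSum (fun n : ℕ => Complex.exp (-2 * u) ^ (n + 1) / ((n : ℂ) + 1))
      (-Complex.log (1 - Complex.exp (-2 * u))) := by
  have hz : ‖Complex.exp (-2 * u)‖ < 1 := by
    rw [norm_cexp_neg_two_mul]
    exact Real.exp_lt_one_iff.mpr (by linarith)
  have h := Complex.hasSum_taylorSeries_neg_log hz
  have h1 := (hasSum_nat_add_iff' (f := fun n : ℕ => Complex.exp (-2*u) ^ n / (n : ℂ)) 1).mpr h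
  simp only [Finset.range_one, Finset.sum_singleton, pow_zero, Nat.cast_zero, div_zero,
    sub_zero] at h1
  convert h1 using 2 with n
  · rfl
  push_cast
  ring

/-- The summand of the double series. -/
noncomputable def phaseF (γ : ℝ) (w : ℂ) (p : ℕ × ℕ) : ℂ :=
  ((-1) ^ p.2 / ((p.1 : ℂ) + 1)) *
    (Complex.exp (-2 * (((p.2 : ℂ) + 1) * (γ : ℂ) - Complex.I * w)) ^ (p.1 + 1) -
     Complex.exp (-2 * (((p.2 : ℂ) + 1) * (γ : ℂ) + Complex.I * w)) ^ (p.1 + 1))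

/-- The `k`-th column sum of the double series. -/
noncomputable def phaseAux (γ : ℝ) (w : ℂ) (k : ℕ) : ℂ :=
  (-1) ^ k *
    (Complex.log (1 - Complex.exp (-2 * (((k : ℂ) + 1) * (γ : ℂ) + Complex.I * w))) -
     Complex.log (1 - Complex.exp (-2 * (((k : ℂ) + 1) * (γ : ℂ) - Complex.I * w))))

lemma re_m (γ : ℝ) (w : ℂ) (k : ℕ) :
    ((((k : ℂ) + 1) * (γ : ℂ) - Complex.I * w).re) = ((k : ℝ) + 1) * γ + w.im := by
  simp [Complex.sub_re, Complex.add_re, Complex.mul_re]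

lemma re_p (γ : ℝ) (w : ℂ) (k : ℕ) :
    ((((k : ℂ) + 1) * (γ : ℂ) + Complex.I * w).re) = ((k : ℝ) + 1) * γ - w.im := by
  simp [Complex.add_re, Complex.mul_re]
  ring

lemma re_m_ge (γ : ℝ) (w : ℂ) (k : ℕ) :
    ((k : ℝ) + 1) * (γ - |w.im|) ≤ ((((k : ℂ) + 1) * (γ : ℂ) - Complex.I * w).re) := by
  rw [re_m]
  have h0 : (0:ℝ) ≤ (k:ℝ) := Nat.cast_nonneg k
  nlinarith [neg_abs_le w.im, abs_nonneg w.im]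

lemma re_p_ge (γ : ℝ) (w : ℂ) (k : ℕ) :
    ((k : ℝ) + 1) * (γ - |w.im|) ≤ ((((k : ℂ) + 1) * (γ : ℂ) + Complex.I * w).re) := by
  rw [re_p]
  have h0 : (0:ℝ) ≤ (k:ℝ) := Nat.cast_nonneg k
  nlinarith [le_abs_self w.im, abs_nonneg w.im]

lemma re_m_pos (γ : ℝ) (w : ℂ) (hw : |w.im| < γ) (k : ℕ) :
    0 < ((((k : ℂ) + 1) * (γ : ℂ) - Complex.I * w).re) := by
  refine lt_of_lt_of_le ?_ (re_m_ge γ w k)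
  have h0 : (0:ℝ) ≤ (k:ℝ) := Nat.cast_nonneg k
  nlinarith [abs_nonneg w.im]

lemma re_p_pos (γ : ℝ) (w : ℂ) (hw : |w.im| < γ) (k : ℕ) :
    0 < ((((k : ℂ) + 1) * (γ : ℂ) + Complex.I * w).re) := by
  refine lt_of_lt_of_le ?_ (re_p_ge γ w k)
  have h0 : (0:ℝ) ≤ (k:ℝ) := Nat.cast_nonneg k
  nlinarith [abs_nonneg w.im]

lemma phaseF_col (γ : ℝ) (w : ℂ) (hw : |w.im| < γ) (k : ℕ) :
    HasSum (fun n => phaseF γ w (n, k)) (phaseAux γ w k) := by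
  have hm := hasSum_exp_neg_log (((k : ℂ) + 1) * (γ : ℂ) - Complex.I * w) (re_m_pos γ w hw k)
  have hp := hasSum_exp_neg_log (((k : ℂ) + 1) * (γ : ℂ) + Complex.I * w) (re_p_pos γ w hw k)
  have h := (hm.sub hp).mul_left ((-1 : ℂ) ^ k)
  convert h using 1
  · rfl
  · funext n
    simp only [phaseF]
    ring
  · simp only [phaseAux]
    ring

lemma phaseF_row (γ : ℝ) (hγ : 0 < γ) (w : ℂ) (n : ℕ) :
    HasSum (fun k => phaseF γ w (n, k))
      ((2 * Complex.I / ((n : ℂ) + 1)) * Complex.sin (2 * ((n : ℂ) + 1) * w) /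
        (1 + (Real.exp (2 * ((n : ℝ) + 1) * γ) : ℂ))) := by
  have hn0 : (0:ℝ) ≤ (n:ℝ) := Nat.cast_nonneg n
  set t : ℝ := Real.exp (-(2 * ((n : ℝ) + 1) * γ)) with ht
  have ht0 : 0 < t := Real.exp_pos _
  have ht1 : t < 1 := Real.exp_lt_one_iff.mpr (by nlinarith)
  have hgeo : HasSum (fun k : ℕ => (-(t : ℂ)) ^ k) (1 - -(t : ℂ))⁻¹ :=
    hasSum_geometric_of_norm_lt_one (by
      rw [norm_neg, Complex.norm_real, Real.norm_eq_abs, abs_of_pos ht0]; exact ht1)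
  have key : ∀ s : ℂ, ∀ k : ℕ,
      Complex.exp (-2 * (((k : ℂ) + 1) * (γ : ℂ) + s)) ^ (n + 1) =
        (t : ℂ) ^ (k + 1) * Complex.exp (-(2 * ((n : ℂ) + 1)) * s) := by
    intro s k
    rw [← Complex.exp_nat_mul]
    rw [show ((t : ℝ) : ℂ) = Complex.exp (((-(2 * ((n : ℝ) + 1) * γ)) : ℝ) : ℂ) by
      rw [ht, Complex.ofReal_exp]]
    rw [← Complex.exp_nat_mul, ← Complex.exp_add]
    congr 1
    push_cast
    ring
  have hn1 : ((n : ℂ) + 1) ≠ 0 := by exact_mod_cast Nat.succ_ne_zero n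
  have h := hgeo.mul_left ((Complex.exp (-(2 * ((n : ℂ) + 1)) * -(Complex.I * w)) -
      Complex.exp (-(2 * ((n : ℂ) + 1)) * (Complex.I * w))) * (t : ℂ) / ((n : ℂ) + 1))
  convert h using 1
  · rfl
  · funext k
    simp only [phaseF]
    rw [show (((k : ℂ) + 1) * (γ : ℂ) - Complex.I * w) =
      (((k : ℂ) + 1) * (γ : ℂ) + -(Complex.I * w)) by ring]
    rw [key (-(Complex.I * w)) k, key (Complex.I * w) k]
    ring
  · rw [Complex.sin]
    have e1 : Complex.exp (-(2 * ((n : ℂ) + 1) * w) * Complex.I) =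
        Complex.exp (-(2 * ((n : ℂ) + 1)) * (Complex.I * w)) := by congr 1; ring
    have e2 : Complex.exp (2 * ((n : ℂ) + 1) * w * Complex.I) =
        Complex.exp (-(2 * ((n : ℂ) + 1)) * -(Complex.I * w)) := by congr 1; ring
    rw [e1, e2]
    rw [show Real.exp (2 * ((n : ℝ) + 1) * γ) = t⁻¹ by
      rw [ht, ← Real.exp_neg]; norm_num]
    rw [Complex.ofReal_inv]
    generalize Complex.exp (-(2 * ((n : ℂ) + 1)) * -(Complex.I * w)) = A
    generalize Complex.exp (-(2 * ((n : ℂ) + 1)) * (Complex.I * w)) = B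
    have ht0' : (t : ℂ) ≠ 0 := by exact_mod_cast ne_of_gt ht0
    have h1t : (1 : ℂ) + (t : ℂ) ≠ 0 := by
      intro hcon
      have : (1 + t : ℝ) = 0 := by exact_mod_cast hcon
      linarith
    rw [sub_neg_eq_add]
    have key2 : ((1:ℂ) + (t:ℂ)⁻¹)⁻¹ = (t:ℂ) * ((1:ℂ)+(t:ℂ))⁻¹ := by
      rw [show (1:ℂ) + (t:ℂ)⁻¹ = ((1:ℂ)+(t:ℂ)) * (t:ℂ)⁻¹ by field_simp; ring,
        mul_inv, inv_inv, mul_comm]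
    rw [div_eq_mul_inv (2 * Complex.I / ((n:ℂ) + 1) * ((B - A) * Complex.I / 2))
      (1 + (t:ℂ)⁻¹), key2]
    linear_combination ((B - A) * (t:ℂ) * ((1:ℂ)+(t:ℂ))⁻¹ / ((n:ℂ)+1)) * Complex.I_sq

/-- For `|Im w| < γ` the series part of the dressed phase is summable, the infinite product
`P(w)` converges, and `exp(−Σ) = P(w)`; equivalently
`exp(−φ(x,z)) = e^{−i(π/2 + x − z)}·P(x − z)` whenever `|Im(x − z)| < γ`. -/
theorem dressedPhase_product_representation (γ : ℝ) (hγ : 0 < γ) (w : ℂ) (hw : |w.im| < γ) :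
    Summable (fun n : ℕ => (2 * Complex.I / ((n : ℂ) + 1)) *
      Complex.sin (2 * ((n : ℂ) + 1) * w) / (1 + (Real.exp (2 * ((n : ℝ) + 1) * γ) : ℂ))) ∧
    Multipliable (phaseProdTerm γ w) ∧
    Complex.exp (-(∑' n : ℕ, (2 * Complex.I / ((n : ℂ) + 1)) *
        Complex.sin (2 * ((n : ℂ) + 1) * w) / (1 + (Real.exp (2 * ((n : ℝ) + 1) * γ) : ℂ)))) =
      ∏' k : ℕ, phaseProdTerm γ w k ∧
    (∀ x z : ℂ, x - z = w →
      Complex.exp (-dressedPhase γ x z) =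
        Complex.exp (-(Complex.I * ((Real.pi / 2 : ℝ) + x - z))) *
          ∏' k : ℕ, phaseProdTerm γ (x - z) k) := by
  have hδ : 0 < γ - |w.im| := sub_pos.mpr hw
  set δ : ℝ := γ - |w.im| with hδdef
  set r : ℝ := Real.exp (-2 * δ) with hr
  have hr0 : 0 < r := Real.exp_pos _
  have hr1 : r < 1 := Real.exp_lt_one_iff.mpr (by linarith)
  -- norm bound for the double series
  have hub : ∀ p : ℕ × ℕ, ‖phaseF γ w p‖ ≤ 2 * (r ^ p.1 * r ^ p.2) := by
    rintro ⟨n, k⟩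
    have hb : ∀ v : ℂ, ((k:ℝ)+1) * δ ≤ v.re →
        ‖Complex.exp (-2 * v) ^ (n + 1)‖ ≤ r ^ (n + k) := by
      intro v hv
      rw [norm_pow, norm_cexp_neg_two_mul]
      have h1 : Real.exp (-2 * v.re) ≤ r ^ (k + 1) := by
        rw [show r ^ (k+1) = Real.exp (((k+1 : ℕ) : ℝ) * (-2 * δ)) by
          rw [Real.exp_nat_mul]]
        apply Real.exp_le_exp.mpr
        push_cast
        nlinarith
      calc Real.exp (-2 * v.re) ^ (n + 1)
          ≤ (r ^ (k + 1)) ^ (n + 1) := by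
            exact pow_le_pow_left₀ (Real.exp_pos _).le h1 _
        _ = r ^ ((k + 1) * (n + 1)) := (pow_mul r (k+1) (n+1)).symm
        _ ≤ r ^ (n + k) := by
            apply pow_le_pow_of_le_one hr0.le hr1.le
            nlinarith
    have hd : ‖((-1 : ℂ)) ^ k / ((n : ℂ) + 1)‖ ≤ 1 := by
      rw [norm_div, norm_pow, norm_neg, norm_one, one_pow,
        show ((n:ℂ)+1) = ((n+1 : ℕ) : ℂ) by push_cast; ring, Complex.norm_natCast]
      rw [div_le_one (by positivity)]
      exact_mod_cast Nat.succ_le_succ (Nat.zero_le n)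
    calc ‖phaseF γ w (n, k)‖
        = ‖((-1 : ℂ)) ^ k / ((n : ℂ) + 1)‖ *
          ‖Complex.exp (-2 * (((k : ℂ) + 1) * (γ : ℂ) - Complex.I * w)) ^ (n + 1) -
           Complex.exp (-2 * (((k : ℂ) + 1) * (γ : ℂ) + Complex.I * w)) ^ (n + 1)‖ := by
          simp only [phaseF]; rw [norm_mul]
      _ ≤ 1 * (r ^ (n + k) + r ^ (n + k)) := by
          apply mul_le_mul hd ((norm_sub_le _ _).trans (add_le_add
            (hb _ (re_m_ge γ w k)) (hb _ (re_p_ge γ w k)))) (norm_nonneg _) zero_le_one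
      _ = 2 * (r ^ n * r ^ k) := by rw [pow_add]; ring
  have hbnd : Summable (fun p : ℕ × ℕ => 2 * (r ^ p.1 * r ^ p.2)) :=
    (((summable_geometric_of_lt_one hr0.le hr1).mul_of_nonneg
      (summable_geometric_of_lt_one hr0.le hr1)
      (fun i => pow_nonneg hr0.le i) (fun i => pow_nonneg hr0.le i)).mul_left 2)
  have hF : Summable (phaseF γ w) := Summable.of_norm_bounded hbnd hub
  have hFtot : HasSum (phaseF γ w) (∑' p, phaseF γ w p) := hF.hasSum
  have hA : HasSum (fun n : ℕ => (2 * Complex.I / ((n : ℂ) + 1)) *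
      Complex.sin (2 * ((n : ℂ) + 1) * w) / (1 + (Real.exp (2 * ((n : ℝ) + 1) * γ) : ℂ)))
      (∑' p, phaseF γ w p) :=
    HasSum.prod_fiberwise hFtot (fun n => phaseF_row γ hγ w n)
  have hswap : HasSum (fun p : ℕ × ℕ => phaseF γ w (p.2, p.1)) (∑' p, phaseF γ w p) :=
    ((Equiv.prodComm ℕ ℕ).hasSum_iff).mpr hFtot
  have hG : HasSum (phaseAux γ w) (∑' p, phaseF γ w p) :=
    HasSum.prod_fiberwise hswap (fun k => phaseF_col γ w hw k)
  have hnegG : HasSum (fun k => -phaseAux γ w k) (-(∑' p, phaseF γ w p)) := hG.neg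
  have hsum2 : Summable (fun k => -phaseAux γ w k) := hnegG.summable
  have he : Summable (fun j : ℕ => -phaseAux γ w (2 * j)) :=
    hsum2.comp_injective (i := fun j => 2 * j) (fun a b h => by simpa using h)
  have ho : Summable (fun j : ℕ => -phaseAux γ w (2 * j + 1)) :=
    hsum2.comp_injective (i := fun j => 2 * j + 1) (fun a b h => by simpa using h)
  have heo : HasSum (fun k => -phaseAux γ w k)
      ((∑' j, -phaseAux γ w (2 * j)) + (∑' j, -phaseAux γ w (2 * j + 1))) :=
    HasSum.even_add_odd he.hasSum ho.hasSum
  have hAB : (∑' j, -phaseAux γ w (2 * j)) + (∑' j, -phaseAux γ w (2 * j + 1)) =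
      -(∑' p, phaseF γ w p) := heo.unique hnegG
  have hpair : HasSum (fun j => -phaseAux γ w (2 * j) + -phaseAux γ w (2 * j + 1))
      (-(∑' p, phaseF γ w p)) := by
    have := he.hasSum.add ho.hasSum
    rwa [hAB] at this
  have hprod : HasProd (fun j => Complex.exp (-phaseAux γ w (2 * j) + -phaseAux γ w (2 * j + 1)))
      (Complex.exp (-(∑' p, phaseF γ w p))) := by
    have h1 : Filter.Tendsto (fun s : Finset ℕ =>
        Complex.exp (∑ i ∈ s, (-phaseAux γ w (2 * i) + -phaseAux γ w (2 * i + 1))))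
        Filter.atTop (nhds (Complex.exp (-(∑' p, phaseF γ w p)))) :=
      (Complex.continuous_exp.continuousAt.tendsto).comp hpair
    exact Filter.Tendsto.congr (fun s => Complex.exp_sum s _) h1
  have hterm : ∀ j : ℕ,
      Complex.exp (-phaseAux γ w (2 * j) + -phaseAux γ w (2 * j + 1)) = phaseProdTerm γ w j := by
    intro j
    have hm1 := one_sub_cexp_neg_two_mul_ne_zero _ (re_m_pos γ w hw (2 * j))
    have hp1 := one_sub_cexp_neg_two_mul_ne_zero _ (re_p_pos γ w hw (2 * j))
    have hm2 := one_sub_cexp_neg_two_mul_ne_zero _ (re_m_pos γ w hw (2 * j + 1))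
    have hp2 := one_sub_cexp_neg_two_mul_ne_zero _ (re_p_pos γ w hw (2 * j + 1))
    have hpow1 : ((-1 : ℂ)) ^ (2 * j) = 1 := by rw [pow_mul]; norm_num
    have hpow2 : ((-1 : ℂ)) ^ (2 * j + 1) = -1 := by rw [pow_succ, hpow1, one_mul]
    simp only [phaseAux, hpow1, hpow2, one_mul, neg_one_mul, neg_neg, neg_sub]
    rw [Complex.exp_add, Complex.exp_sub, Complex.exp_sub,
      Complex.exp_log hm1, Complex.exp_log hp1, Complex.exp_log hm2, Complex.exp_log hp2]
    simp only [phaseProdTerm]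
    have c1 : (((2 * j : ℕ) : ℂ)) + 1 = 2 * (j : ℂ) + 1 := by push_cast; ring
    have c2 : (((2 * j + 1 : ℕ) : ℂ)) + 1 = 2 * (j : ℂ) + 2 := by push_cast; ring
    rw [c1, c2, div_mul_div_comm]
  have hP : HasProd (phaseProdTerm γ w) (Complex.exp (-(∑' p, phaseF γ w p))) :=
    (funext hterm : _) ▸ hprod
  refine ⟨hA.summable, hP.multipliable, ?_, ?_⟩
  · rw [hA.tsum_eq]
    exact hP.tprod_eq.symm
  · intro x z hxz
    simp only [dressedPhase]
    rw [hxz, neg_add, Complex.exp_add]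
    congr 1
    rw [hA.tsum_eq]
    exact hP.tprod_eq.symm
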